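/- For every nonnegative integer n, Σ_{k=0}^{n} (q^{-n};q)_k (q^{n+2};q)_k q^k = (-1)^{n+1} q^{3n²/2 + 7n/2 + 1} / (1 - q^{n+1}) · Σ_{j=-n-1}^{n} (-1)^j q^{-j(3j+1)/2}, as an identity of rational functions in q (all exponents appearing are integers). -/

import Mathlib

/-- Finite q-Pochhammer symbol `(a;q)_n`. -/
noncomputable def qp (a q : ℂ) (n : ℕ) : ℂ := ∏ k ∈ Finset.range n, (1 - a * q ^ k)

private lemma qp_succ (a q : ℂ) (n : ℕ) : qp a q (n + 1) = qp a q n * (1 - a * q ^ n) :=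
  Finset.prod_range_succ _ _

private lemma qp_succ' (a q : ℂ) (n : ℕ) : qp a q (n + 1) = (1 - a) * qp (a * q) q n := by
  unfold qp
  rw [Finset.prod_range_succ']
  simp only [pow_zero, mul_one]
  rw [mul_comm]
  congr 1
  exact Finset.prod_congr rfl fun i _ => by ring

private lemma qp_zero (a q : ℂ) : qp a q 0 = 1 := Finset.prod_range_zero _

private lemma qp_one (a q : ℂ) : qp a q 1 = 1 - a := by
  simp [qp]

private lemma zpow_neg_nat (q : ℂ) (m : ℕ) : q ^ (-(m : ℤ)) = (q ^ m)⁻¹ := by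
  rw [zpow_neg, zpow_natCast]

private lemma U_top (q : ℂ) (hq0 : q ≠ 0) (n : ℕ) : qp ((q ^ n)⁻¹) q (n + 1) = 0 := by
  unfold qp
  apply Finset.prod_eq_zero (Finset.self_mem_range_succ n)
  rw [inv_mul_cancel₀ (pow_ne_zero n hq0), sub_self]

private noncomputable def Msum (q : ℂ) (n : ℕ) : ℂ :=
  ∑ k ∈ Finset.range (n + 1), qp ((q ^ n)⁻¹) q k * qp (q ^ (n + 1)) q (k + 1) * q ^ k

private noncomputable def Wfun (q : ℂ) (n k : ℕ) : ℂ :=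
  ((1 - q ^ (n + 1) - q ^ (2 * n + 3) + q ^ (3 * n + 4)) +
      (q ^ (2 * n + 3) - q ^ (n + 2)) * q ^ k) *
    (qp ((q ^ n)⁻¹) q k * qp (q ^ (n + 1)) q (k + 1))

private lemma M_rec (q : ℂ) (hq0 : q ≠ 0) (n : ℕ) (hne : (1 : ℂ) - q ^ (n + 1) ≠ 0) :
    Msum q (n + 1) = q ^ (n + 1) - q ^ (3 * n + 4) - q ^ (3 * n + 5) * Msum q n := by
  have hpn : (q : ℂ) ^ n ≠ 0 := pow_ne_zero _ hq0
  have hpn1 : (q : ℂ) ^ (n + 1) ≠ 0 := pow_ne_zero _ hq0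
  -- the key pointwise telescoping identity
  have key : ∀ k : ℕ,
      (1 - q ^ (n + 1)) *
          (qp ((q ^ (n + 1))⁻¹) q (k + 1) * qp (q ^ (n + 1 + 1)) q (k + 1 + 1) * q ^ (k + 1))
        = (Wfun q n (k + 1) - Wfun q n k) -
            q ^ (3 * n + 5) *
              ((1 - q ^ (n + 1)) * (qp ((q ^ n)⁻¹) q k * qp (q ^ (n + 1)) q (k + 1) * q ^ k)) := by
    intro k
    have e1 : ((q : ℂ) ^ (n + 1))⁻¹ * q = (q ^ n)⁻¹ := by
      rw [pow_succ, mul_inv, mul_assoc, inv_mul_cancel₀ hq0, mul_one]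
    have hU1 : qp ((q ^ (n + 1))⁻¹) q (k + 1)
        = (1 - (q ^ (n + 1))⁻¹) * qp ((q ^ n)⁻¹) q k := by
      rw [qp_succ', e1]
    have hV1 : (1 - q ^ (n + 1)) * qp (q ^ (n + 1 + 1)) q (k + 1 + 1)
        = qp (q ^ (n + 1)) q (k + 1) * (1 - q ^ (n + 1) * q ^ (k + 1)) *
            (1 - q ^ (n + 1) * q ^ (k + 2)) := by
      have h3 : qp (q ^ (n + 1)) q (k + 3)
          = (1 - q ^ (n + 1)) * qp (q ^ (n + 1 + 1)) q (k + 2) := by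
        rw [qp_succ' (q ^ (n + 1)) q (k + 2), ← pow_succ]
      have h4 : qp (q ^ (n + 1)) q (k + 3)
          = qp (q ^ (n + 1)) q (k + 1) * (1 - q ^ (n + 1) * q ^ (k + 1)) *
              (1 - q ^ (n + 1) * q ^ (k + 2)) := by
        rw [show k + 3 = (k + 2) + 1 from rfl, qp_succ (q ^ (n + 1)) q (k + 2),
          show k + 2 = (k + 1) + 1 from rfl, qp_succ (q ^ (n + 1)) q (k + 1)]
      rw [show k + 1 + 1 = k + 2 from rfl, ← h3, h4]
    calc (1 - q ^ (n + 1)) *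
          (qp ((q ^ (n + 1))⁻¹) q (k + 1) * qp (q ^ (n + 1 + 1)) q (k + 1 + 1) * q ^ (k + 1))
        = ((1 - (q ^ (n + 1))⁻¹) * qp ((q ^ n)⁻¹) q k) *
            ((1 - q ^ (n + 1)) * qp (q ^ (n + 1 + 1)) q (k + 1 + 1)) * q ^ (k + 1) := by
          rw [hU1]; ring
      _ = ((1 - (q ^ (n + 1))⁻¹) * qp ((q ^ n)⁻¹) q k) *
            (qp (q ^ (n + 1)) q (k + 1) * (1 - q ^ (n + 1) * q ^ (k + 1)) *
              (1 - q ^ (n + 1) * q ^ (k + 2))) * q ^ (k + 1) := by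
          rw [hV1]
      _ = (Wfun q n (k + 1) - Wfun q n k) -
            q ^ (3 * n + 5) *
              ((1 - q ^ (n + 1)) * (qp ((q ^ n)⁻¹) q k * qp (q ^ (n + 1)) q (k + 1) * q ^ k)) := by
          unfold Wfun
          rw [qp_succ ((q ^ n)⁻¹) q k, qp_succ (q ^ (n + 1)) q (k + 1)]
          field_simp
          ring
  have hW0 : Wfun q n 0 = ((1 - q ^ (n + 1) - q ^ (2 * n + 3) + q ^ (3 * n + 4)) +
      (q ^ (2 * n + 3) - q ^ (n + 2))) * (1 - q ^ (n + 1)) := by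
    unfold Wfun
    rw [qp_zero, qp_one]
    simp
  have hWtop : Wfun q n (n + 1) = 0 := by
    unfold Wfun
    rw [U_top q hq0 n]
    ring
  have expand : (1 - q ^ (n + 1)) * Msum q (n + 1)
      = (∑ k ∈ Finset.range (n + 1),
          (1 - q ^ (n + 1)) *
            (qp ((q ^ (n + 1))⁻¹) q (k + 1) * qp (q ^ (n + 1 + 1)) q (k + 1 + 1) * q ^ (k + 1)))
        + (1 - q ^ (n + 1)) * (1 - q ^ (n + 1 + 1)) := by
    rw [Msum, Finset.sum_range_succ', mul_add, Finset.mul_sum]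
    congr 1
    rw [qp_zero, qp_one]
    ring
  have step2 : ∑ k ∈ Finset.range (n + 1),
      (1 - q ^ (n + 1)) *
        (qp ((q ^ (n + 1))⁻¹) q (k + 1) * qp (q ^ (n + 1 + 1)) q (k + 1 + 1) * q ^ (k + 1))
      = (Wfun q n (n + 1) - Wfun q n 0) - q ^ (3 * n + 5) * ((1 - q ^ (n + 1)) * Msum q n) := by
    rw [Finset.sum_congr rfl fun k _ => key k, Finset.sum_sub_distrib,
      Finset.sum_range_sub (Wfun q n) (n + 1)]
    congr 1
    rw [Msum, Finset.mul_sum, Finset.mul_sum]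
  have goal2 : (1 - q ^ (n + 1)) * Msum q (n + 1)
      = (1 - q ^ (n + 1)) * (q ^ (n + 1) - q ^ (3 * n + 4) - q ^ (3 * n + 5) * Msum q n) := by
    rw [expand, step2, hWtop, hW0]
    ring
  exact mul_left_cancel₀ hne goal2

private def En (n : ℕ) : ℤ := (n : ℤ) * (3 * (n : ℤ) + 7) / 2 + 1

private def pent (j : ℤ) : ℤ := j * (3 * j + 1) / 2

private lemma closed (q : ℂ) (hq0 : q ≠ 0) (hq : ‖q‖ < 1) (n : ℕ) :
    Msum q n = (-1 : ℂ) ^ (n + 1) *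
      ∑ j ∈ Finset.Icc (-(n : ℤ) - 1) (n : ℤ), (-1 : ℂ) ^ j * q ^ (En n - pent j) := by
  induction n with
  | zero =>
      have hset : Finset.Icc (-((0 : ℕ) : ℤ) - 1) ((0 : ℕ) : ℤ) = {-1, 0} := by
        ext x
        simp [Finset.mem_Icc]
        omega
      rw [hset, Finset.sum_insert (by decide), Finset.sum_singleton]
      have h1 : En 0 - pent (-1) = 0 := by decide
      have h2 : En 0 - pent 0 = 1 := by decide
      rw [h1, h2]
      simp [Msum, qp_zero, qp_one, zpow_neg]
      ring
  | succ n ih =>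
      have hne : (1 : ℂ) - q ^ (n + 1) ≠ 0 := by
        intro h
        have hq1 : q ^ (n + 1) = 1 := by linear_combination -h
        have hlt : ‖q ^ (n + 1)‖ < 1 := by
          rw [norm_pow]
          exact pow_lt_one₀ (norm_nonneg q) hq (Nat.succ_ne_zero n)
        rw [hq1] at hlt
        simp at hlt
      obtain ⟨c, hc⟩ := Int.even_mul_succ_self (n : ℤ)
      have hdiv : ∀ a b : ℤ, a = 2 * b → a / 2 = b := fun a b h => by
        rw [h, Int.mul_ediv_cancel_left _ (by norm_num)]
      have e_next : En (n + 1) = En n + (3 * (n : ℤ) + 5) := by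
        unfold En
        push_cast
        rw [hdiv (((n : ℤ) + 1) * (3 * ((n : ℤ) + 1) + 7)) ((n : ℤ) * (n : ℤ) + c + 6 * n + 5)
            (by linear_combination hc),
          hdiv ((n : ℤ) * (3 * (n : ℤ) + 7)) ((n : ℤ) * (n : ℤ) + c + 3 * n)
            (by linear_combination hc)]
        ring
      have hA : En (n + 1) - pent ((n : ℤ) + 1) = 3 * (n : ℤ) + 4 := by
        unfold En pent
        push_cast
        rw [hdiv (((n : ℤ) + 1) * (3 * ((n : ℤ) + 1) + 7)) ((n : ℤ) * (n : ℤ) + c + 6 * n + 5)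
            (by linear_combination hc),
          hdiv (((n : ℤ) + 1) * (3 * ((n : ℤ) + 1) + 1)) ((n : ℤ) * (n : ℤ) + c + 3 * n + 2)
            (by linear_combination hc)]
        ring
      have hB : En (n + 1) - pent (-(n : ℤ) - 2) = (n : ℤ) + 1 := by
        unfold En pent
        push_cast
        rw [hdiv (((n : ℤ) + 1) * (3 * ((n : ℤ) + 1) + 7)) ((n : ℤ) * (n : ℤ) + c + 6 * n + 5)
            (by linear_combination hc),
          hdiv ((-(n : ℤ) - 2) * (3 * (-(n : ℤ) - 2) + 1)) ((n : ℤ) * (n : ℤ) + c + 5 * n + 5)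
            (by linear_combination hc)]
        ring
      have hset : Finset.Icc (-((n + 1 : ℕ) : ℤ) - 1) ((n + 1 : ℕ) : ℤ)
          = insert ((n : ℤ) + 1) (insert (-(n : ℤ) - 2) (Finset.Icc (-(n : ℤ) - 1) (n : ℤ))) := by
        ext x
        simp only [Finset.mem_Icc, Finset.mem_insert]
        push_cast
        omega
      have hnm1 : ((n : ℤ) + 1) ∉ insert (-(n : ℤ) - 2) (Finset.Icc (-(n : ℤ) - 1) (n : ℤ)) := by
        simp only [Finset.mem_Icc, Finset.mem_insert]
        omega
      have hnm2 : (-(n : ℤ) - 2) ∉ Finset.Icc (-(n : ℤ) - 1) (n : ℤ) := by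
        simp only [Finset.mem_Icc]
        omega
      rw [M_rec q hq0 n hne, ih, hset, Finset.sum_insert hnm1, Finset.sum_insert hnm2]
      have hgen : ∑ j ∈ Finset.Icc (-(n : ℤ) - 1) (n : ℤ),
            (-1 : ℂ) ^ j * q ^ (En (n + 1) - pent j)
          = q ^ (3 * n + 5) *
            ∑ j ∈ Finset.Icc (-(n : ℤ) - 1) (n : ℤ), (-1 : ℂ) ^ j * q ^ (En n - pent j) := by
        rw [Finset.mul_sum]
        apply Finset.sum_congr rfl
        intro j _
        have he : En (n + 1) - pent j = (3 * (n : ℤ) + 5) + (En n - pent j) := by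
          rw [e_next]; ring
        rw [he, zpow_add₀ hq0]
        have hz : q ^ (3 * (n : ℤ) + 5) = q ^ (3 * n + 5) := by
          rw [show 3 * (n : ℤ) + 5 = ((3 * n + 5 : ℕ) : ℤ) by push_cast; ring, zpow_natCast]
        rw [hz]
        ring
      rw [hgen, hA, hB]
      have hq1 : q ^ (3 * (n : ℤ) + 4) = q ^ (3 * n + 4) := by
        rw [show 3 * (n : ℤ) + 4 = ((3 * n + 4 : ℕ) : ℤ) by push_cast; ring, zpow_natCast]
      have hq2 : q ^ ((n : ℤ) + 1) = q ^ (n + 1) := by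
        rw [show (n : ℤ) + 1 = ((n + 1 : ℕ) : ℤ) by push_cast; ring, zpow_natCast]
      rw [hq1, hq2]
      have hs1 : (-1 : ℂ) ^ ((n : ℤ) + 1) = (-1 : ℂ) ^ (n + 1) := by
        rw [show (n : ℤ) + 1 = ((n + 1 : ℕ) : ℤ) by push_cast; ring, zpow_natCast]
      have hs2 : (-1 : ℂ) ^ (-(n : ℤ) - 2) = -(-1 : ℂ) ^ (n + 1) := by
        rw [show -(n : ℤ) - 2 = -((n + 2 : ℕ) : ℤ) by push_cast; ring, zpow_neg, zpow_natCast,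
          ← inv_pow]
        norm_num
        rw [pow_succ]
        ring
      rw [hs1, hs2]
      have hsq : (-1 : ℂ) ^ (n + 1) * (-1 : ℂ) ^ (n + 1) = 1 := by
        rw [← pow_add]
        exact Even.neg_one_pow ⟨n + 1, by ring⟩
      have hstep : (-1 : ℂ) ^ (n + 1 + 1) = -(-1 : ℂ) ^ (n + 1) := by
        rw [pow_succ]; ring
      rw [hstep]
      linear_combination (q ^ (3 * n + 4) - q ^ (n + 1)) * hsq

/-- `Σ_{k=0}^n (q^{-n};q)_k (q^{n+2};q)_k q^k
      = (-1)^{n+1} q^{3n²/2+7n/2+1}/(1-q^{n+1}) · Σ_{j=-n-1}^n (-1)^j q^{-j(3j+1)/2}`,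
    as an identity of rational functions (stated for all `q` with `0 < |q| < 1`). -/
theorem stmt12 (n : ℕ) (q : ℂ) (hq : ‖q‖ < 1) (hq0 : q ≠ 0) :
    ∑ k ∈ Finset.range (n + 1),
        qp (q ^ (-(n : ℤ))) q k * qp (q ^ (n + 2)) q k * q ^ k =
      (-1 : ℂ) ^ (n + 1) * q ^ ((n : ℤ) * (3 * n + 7) / 2 + 1) / (1 - q ^ (n + 1)) *
        ∑ j ∈ Finset.Icc (-(n : ℤ) - 1) (n : ℤ),
          (-1 : ℂ) ^ j * q ^ (-(j * (3 * j + 1) / 2)) := by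
  have hne : (1 : ℂ) - q ^ (n + 1) ≠ 0 := by
    intro h
    have hq1 : q ^ (n + 1) = 1 := by linear_combination -h
    have hlt : ‖q ^ (n + 1)‖ < 1 := by
      rw [norm_pow]
      exact pow_lt_one₀ (norm_nonneg q) hq (Nat.succ_ne_zero n)
    rw [hq1] at hlt
    simp at hlt
  apply mul_left_cancel₀ hne
  have hM : (1 - q ^ (n + 1)) *
      (∑ k ∈ Finset.range (n + 1),
        qp (q ^ (-(n : ℤ))) q k * qp (q ^ (n + 2)) q k * q ^ k) = Msum q n := by
    rw [Msum, Finset.mul_sum]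
    apply Finset.sum_congr rfl
    intro k _
    have h1 : qp (q ^ (n + 1)) q (k + 1) = (1 - q ^ (n + 1)) * qp (q ^ (n + 2)) q k := by
      rw [qp_succ' (q ^ (n + 1)) q k, ← pow_succ]
    rw [h1, zpow_neg_nat]
    ring
  rw [hM, closed q hq0 hq n]
  have hT : (1 - q ^ (n + 1)) *
      ((-1 : ℂ) ^ (n + 1) * q ^ ((n : ℤ) * (3 * n + 7) / 2 + 1) / (1 - q ^ (n + 1)) *
        ∑ j ∈ Finset.Icc (-(n : ℤ) - 1) (n : ℤ),
          (-1 : ℂ) ^ j * q ^ (-(j * (3 * j + 1) / 2)))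
      = (-1 : ℂ) ^ (n + 1) * (q ^ ((n : ℤ) * (3 * n + 7) / 2 + 1) *
        ∑ j ∈ Finset.Icc (-(n : ℤ) - 1) (n : ℤ),
          (-1 : ℂ) ^ j * q ^ (-(j * (3 * j + 1) / 2))) := by
    field_simp
  rw [hT]
  congr 1
  rw [Finset.mul_sum]
  apply Finset.sum_congr rfl
  intro j _
  have he : En n - pent j = ((n : ℤ) * (3 * n + 7) / 2 + 1) + (-(j * (3 * j + 1) / 2)) := by
    unfold En pent
    ring
  rw [he, zpow_add₀ hq0]
  ring
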